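/- Fix $0<\alpha<1$ and $\ell\in(1/2,1)$, and set $\theta_\ell = \frac{\alpha}{2-1/\ell}$. If $L_\alpha(\theta_\ell)<\ell$, then $L_\alpha(\theta)<\ell$ for all $\theta>0$; in particular $\sup_{\theta>0} L_\alpha(\theta)\le\ell$. -/

import Mathlib

open Real

open MeasureTheory intervalIntegral Set Filter


lemma int_g {α : ℝ} (hα1 : α < 1) :
    IntervalIntegrable (fun u : ℝ => (1 - u) ^ (-α)) volume 0 1 := by
  have h : IntervalIntegrable (fun x : ℝ => x ^ (-α)) volume 0 1 :=
    intervalIntegral.intervalIntegrable_rpow' (by linarith)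
  have := (h.comp_sub_left 1)
  norm_num at this
  exact this.symm

lemma contOn_pow1 {α : ℝ} (hα1 : α < 1) :
    Continuous (fun u : ℝ => (1 - u) ^ (1 - α)) := by
  rw [continuous_iff_continuousAt]
  intro x
  exact (Real.continuousAt_rpow_const _ _ (Or.inr (by linarith))).comp
    (by fun_prop)

lemma hasDeriv_F {α : ℝ} (hα1 : α < 1) {θ₀ : ℝ} (hθ : 0 < θ₀) :
    HasDerivAt (fun θ : ℝ => ∫ u in (0:ℝ)..1, Real.exp (-2 * θ * u) * (1 - u) ^ (-α))
      (∫ u in (0:ℝ)..1, -2 * u * (Real.exp (-2 * θ₀ * u) * (1 - u) ^ (-α))) θ₀ := by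
  have hmeas : ∀ x : ℝ, AEStronglyMeasurable
      (fun u : ℝ => Real.exp (-2 * x * u) * (1 - u) ^ (-α))
      (volume.restrict (Set.uIoc (0:ℝ) 1)) := by
    intro x
    apply Measurable.aestronglyMeasurable
    fun_prop
  have h := intervalIntegral.hasDerivAt_integral_of_dominated_loc_of_deriv_le
    (μ := volume) (a := (0:ℝ)) (b := 1)
    (F := fun (θ : ℝ) (u : ℝ) => Real.exp (-2 * θ * u) * (1 - u) ^ (-α))
    (F' := fun (θ : ℝ) (u : ℝ) => -2 * u * (Real.exp (-2 * θ * u) * (1 - u) ^ (-α)))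
    (x₀ := θ₀) (bound := fun u : ℝ => 2 * (1 - u) ^ (-α))
    (s := Metric.ball θ₀ (θ₀ / 2)) (Metric.ball_mem_nhds θ₀ (half_pos hθ))
    (Filter.Eventually.of_forall hmeas)
    (by
      exact ((int_g hα1).continuousOn_mul (by fun_prop)))
    (by
      apply Measurable.aestronglyMeasurable
      fun_prop)
    (by
      filter_upwards with u hu x hx
      have hu0 : 0 < u := by
        rw [Set.uIoc_of_le (by norm_num : (0:ℝ) ≤ 1)] at hu
        exact hu.1
      have hu1 : u ≤ 1 := by
        rw [Set.uIoc_of_le (by norm_num : (0:ℝ) ≤ 1)] at hu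
        exact hu.2
      have hxpos : 0 < x := by
        rw [Metric.mem_ball, Real.dist_eq, abs_lt] at hx
        linarith
      have hg0 : (0:ℝ) ≤ (1 - u) ^ (-α) := Real.rpow_nonneg (by linarith) _
      have hexp : Real.exp (-2 * x * u) ≤ 1 := by
        rw [Real.exp_le_one_iff]
        nlinarith
      have hexp0 : 0 < Real.exp (-2 * x * u) := Real.exp_pos _
      rw [norm_mul, norm_mul, Real.norm_eq_abs, Real.norm_eq_abs, Real.norm_eq_abs,
        abs_mul, abs_of_nonneg hg0, abs_of_pos hexp0, abs_of_pos hu0, abs_neg, abs_two]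
      nlinarith [mul_nonneg (sub_nonneg.2 (mul_le_one₀ hu1 hexp0.le hexp)) hg0])
    (by
      exact ((int_g hα1).continuousOn_mul (by fun_prop)))
    (by
      filter_upwards with u hu x hx
      have h1 : HasDerivAt (fun x : ℝ => Real.exp (-2 * x * u))
          (Real.exp (-2 * x * u) * (-2 * u)) x := by
        have : HasDerivAt (fun x : ℝ => -2 * x * u) (-2 * u) x := by
          simpa using ((hasDerivAt_id x).const_mul (-2)).mul_const u
        exact this.exp
      have := h1.mul_const ((1 - u) ^ (-α))
      exact this.congr_deriv (by ring))
  exact h.2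


lemma ftcA {α : ℝ} (hα0 : 0 < α) (hα1 : α < 1) (θ : ℝ) :
    ∫ u in (0:ℝ)..1,
      (-2 * θ * (Real.exp (-2 * θ * u) * (1 - u) ^ (1 - α))
        - (1 - α) * (Real.exp (-2 * θ * u) * (1 - u) ^ (-α))) = -1 := by
  have hderiv : ∀ x ∈ Set.Ioo (0:ℝ) 1,
      HasDerivWithinAt (fun u : ℝ => Real.exp (-2 * θ * u) * (1 - u) ^ (1 - α))
        (-2 * θ * (Real.exp (-2 * θ * x) * (1 - x) ^ (1 - α))
          - (1 - α) * (Real.exp (-2 * θ * x) * (1 - x) ^ (-α))) (Set.Ioi x) x := by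
    intro x hx
    have h1 : HasDerivAt (fun u : ℝ => Real.exp (-2 * θ * u))
        (Real.exp (-2 * θ * x) * (-2 * θ)) x := by
      have : HasDerivAt (fun u : ℝ => -2 * θ * u) (-2 * θ) x := by
        simpa using (hasDerivAt_id x).const_mul (-2 * θ)
      exact this.exp
    have h2 : HasDerivAt (fun u : ℝ => (1 - u) ^ (1 - α))
        ((1 - α) * (1 - x) ^ (-α) * (-1)) x := by
      have hin : HasDerivAt (fun u : ℝ => 1 - u) (-1) x := by
        simpa using (hasDerivAt_id x).const_sub (1:ℝ)
      have hout := Real.hasDerivAt_rpow_const (x := 1 - x) (p := 1 - α)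
        (Or.inl (by nlinarith [hx.2] : (1:ℝ) - x ≠ 0))
      have := hout.comp x hin
      exact this.congr_deriv (by rw [show (1:ℝ) - α - 1 = -α by ring])
    have := (h1.mul h2).hasDerivWithinAt (s := Set.Ioi x)
    exact this.congr_deriv (by ring)
  have hcont : ContinuousOn (fun u : ℝ => Real.exp (-2 * θ * u) * (1 - u) ^ (1 - α))
      (Set.Icc 0 1) :=
    (Continuous.mul (by fun_prop) (contOn_pow1 hα1)).continuousOn
  have hint : IntervalIntegrable
      (fun x : ℝ => -2 * θ * (Real.exp (-2 * θ * x) * (1 - x) ^ (1 - α))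
        - (1 - α) * (Real.exp (-2 * θ * x) * (1 - x) ^ (-α))) volume 0 1 := by
    apply IntervalIntegrable.sub
    · exact (Continuous.intervalIntegrable (by
        exact (continuous_const.mul (Continuous.mul (by fun_prop) (contOn_pow1 hα1)))) 0 1)
    · exact ((int_g hα1).continuousOn_mul (by fun_prop)).const_mul _
  have h := intervalIntegral.integral_eq_sub_of_hasDeriv_right_of_le
    (by norm_num : (0:ℝ) ≤ 1) hcont (by
      intro x hx
      exact hderiv x hx) hint
  rw [h]
  norm_num [Real.zero_rpow (show (1:ℝ) - α ≠ 0 by linarith)]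

lemma int_f {α : ℝ} (hα1 : α < 1) (θ : ℝ) :
    IntervalIntegrable (fun u : ℝ => Real.exp (-2 * θ * u) * (1 - u) ^ (-α)) volume 0 1 :=
  (int_g hα1).continuousOn_mul (by fun_prop)

lemma int_uf {α : ℝ} (hα1 : α < 1) (θ : ℝ) :
    IntervalIntegrable
      (fun u : ℝ => -2 * u * (Real.exp (-2 * θ * u) * (1 - u) ^ (-α))) volume 0 1 := by
  have := ((int_f hα1 θ).continuousOn_mul (g := fun u : ℝ => -2 * u) (by fun_prop))
  simpa [mul_assoc] using this

lemma thetaD {α : ℝ} (hα0 : 0 < α) (hα1 : α < 1) (θ : ℝ) :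
    θ * ∫ u in (0:ℝ)..1, -2 * u * (Real.exp (-2 * θ * u) * (1 - u) ^ (-α))
      = 1 - (2 * θ + (1 - α)) * ∫ u in (0:ℝ)..1, Real.exp (-2 * θ * u) * (1 - u) ^ (-α) := by
  have hA := ftcA hα0 hα1 θ
  have hcongr : ∫ u in (0:ℝ)..1,
      (-2 * θ * (Real.exp (-2 * θ * u) * (1 - u) ^ (1 - α))
        - (1 - α) * (Real.exp (-2 * θ * u) * (1 - u) ^ (-α)))
      = ∫ u in (0:ℝ)..1,
        ((-(2 * θ) - (1 - α)) * (Real.exp (-2 * θ * u) * (1 - u) ^ (-α))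
          + -θ * (-2 * u * (Real.exp (-2 * θ * u) * (1 - u) ^ (-α)))) := by
    apply intervalIntegral.integral_congr
    intro u hu
    rw [Set.uIcc_of_le (by norm_num : (0:ℝ) ≤ 1)] at hu
    have hkey : (1 - u) ^ (1 - α) = (1 - u) * (1 - u) ^ (-α) := by
      rcases eq_or_lt_of_le hu.2 with h | h
      · rw [← h]
        norm_num
        exact Real.zero_rpow (by linarith)
      · have h1u : 0 < 1 - u := by linarith
        rw [show (1:ℝ) - α = 1 + (-α) by ring, Real.rpow_add h1u, Real.rpow_one]
    simp only [hkey]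
    ring
  rw [hcongr] at hA
  rw [intervalIntegral.integral_add
    (((int_f hα1 θ)).const_mul _) ((int_uf hα1 θ).const_mul _),
    intervalIntegral.integral_const_mul, intervalIntegral.integral_const_mul] at hA
  linarith

lemma hasDeriv_L {α : ℝ} (hα0 : 0 < α) (hα1 : α < 1) (L : ℝ → ℝ)
    (hL : ∀ θ : ℝ, L θ = θ * ∫ u in (0:ℝ)..1, Real.exp (-2 * θ * u) * (1 - u) ^ (-α))
    {θ : ℝ} (hθ : 0 < θ) :
    HasDerivAt L (1 - (2 - α / θ) * L θ) θ := by
  have hfun : L = fun t : ℝ =>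
      t * ∫ u in (0:ℝ)..1, Real.exp (-2 * t * u) * (1 - u) ^ (-α) := funext hL
  set F : ℝ → ℝ := fun t => ∫ u in (0:ℝ)..1, Real.exp (-2 * t * u) * (1 - u) ^ (-α) with hF
  set D : ℝ → ℝ := fun t => ∫ u in (0:ℝ)..1, -2 * u * (Real.exp (-2 * t * u) * (1 - u) ^ (-α))
    with hD
  have hder : HasDerivAt L (1 * F θ + θ * D θ) θ := by
    rw [hfun]
    exact (hasDerivAt_id θ).mul (hasDeriv_F hα1 hθ)
  have hid : θ * D θ = 1 - (2 * θ + (1 - α)) * F θ := thetaD hα0 hα1 θ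
  have hLθ : L θ = θ * F θ := hL θ
  convert hder using 1
  rw [hid, hLθ]
  field_simp
  ring

lemma F_le {α : ℝ} (hα0 : 0 < α) (hα1 : α < 1) {θ : ℝ} (hθ : 0 ≤ θ) :
    (∫ u in (0:ℝ)..1, Real.exp (-2 * θ * u) * (1 - u) ^ (-α)) ≤ 1 / (1 - α) := by
  have hval : ∫ u in (0:ℝ)..1, (1 - u) ^ (-α) = 1 / (1 - α) := by
    rw [show (fun u : ℝ => (1 - u) ^ (-α)) = fun u : ℝ => (fun x : ℝ => x ^ (-α)) (1 - u)
        from rfl,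
      intervalIntegral.integral_comp_sub_left (fun x : ℝ => x ^ (-α)) 1]
    norm_num
    rw [integral_rpow (Or.inl (by linarith))]
    rw [Real.zero_rpow (by linarith), Real.one_rpow]
    ring
  rw [← hval]
  apply intervalIntegral.integral_mono_on (by norm_num) (int_f hα1 θ) (int_g hα1)
  intro u hu
  have hg0 : (0:ℝ) ≤ (1 - u) ^ (-α) := Real.rpow_nonneg (by linarith [hu.2]) _
  have hexp : Real.exp (-2 * θ * u) ≤ 1 := by
    rw [Real.exp_le_one_iff]
    nlinarith [hu.1]
  nlinarith [Real.exp_pos (-2 * θ * u)]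

/-- one-point criterion: with `θ_ℓ = α/(2 - 1/ℓ)`,
if `L_α(θ_ℓ) < ℓ` then `L_α(θ) < ℓ` for all `θ > 0`; in particular
`sup_{θ>0} L_α(θ) ≤ ℓ`. -/
theorem one_point_criterion (α : ℝ) (hα0 : 0 < α) (hα1 : α < 1)
    (ℓ : ℝ) (hℓ : ℓ ∈ Set.Ioo (1 / 2 : ℝ) 1)
    (L : ℝ → ℝ)
    (hL : ∀ θ : ℝ, L θ = θ * ∫ u in (0 : ℝ)..1, Real.exp (-2 * θ * u) * (1 - u) ^ (-α))
    (hpoint : L (α / (2 - 1 / ℓ)) < ℓ) :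
    (∀ θ : ℝ, 0 < θ → L θ < ℓ) ∧ ⨆ θ : Set.Ioi (0 : ℝ), L θ ≤ ℓ := by
  obtain ⟨hℓ2, hℓ1⟩ := hℓ
  have hℓ0 : 0 < ℓ := by linarith
  have hden : 0 < 2 - 1 / ℓ := by
    rw [sub_pos, div_lt_iff₀ hℓ0]; linarith
  set θℓ : ℝ := α / (2 - 1 / ℓ) with hθℓdef
  have hθℓpos : 0 < θℓ := div_pos hα0 hden
  have hcontAt : ∀ θ : ℝ, 0 < θ → ContinuousAt L θ := fun θ hθ =>
    (hasDeriv_L hα0 hα1 L hL hθ).continuousAt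
  have hmain : ∀ θ : ℝ, 0 < θ → L θ < ℓ := by
    intro θ₀ hθ₀
    by_contra hcon
    push_neg at hcon
    rcases lt_trichotomy θ₀ θℓ with hlt | heq | hgt
    · -- case B : θ₀ < θℓ, use sSup, derivative positive at last crossing
      set T : Set ℝ := {θ ∈ Set.Icc θ₀ θℓ | ℓ ≤ L θ} with hT
      have hTne : T.Nonempty := ⟨θ₀, ⟨le_refl _, hlt.le⟩, hcon⟩
      have hTbdd : BddAbove T := ⟨θℓ, fun x hx => hx.1.2⟩
      have hTclosed : IsClosed T := by
        have : ContinuousOn L (Set.Icc θ₀ θℓ) := fun x hx =>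
          (hcontAt x (lt_of_lt_of_le hθ₀ hx.1)).continuousWithinAt
        exact this.preimage_isClosed_of_isClosed isClosed_Icc isClosed_Ici
      set θs := sSup T with hθs
      have hθsT : θs ∈ T := hTclosed.csSup_mem hTne hTbdd
      have hθspos : 0 < θs := lt_of_lt_of_le hθ₀ hθsT.1.1
      have hθsne : θs ≠ θℓ := fun h => absurd hθsT.2 (by rw [h]; exact not_le.2 hpoint)
      have hθslt : θs < θℓ := lt_of_le_of_ne hθsT.1.2 hθsne
      have habove : ∀ θ ∈ Set.Ioc θs θℓ, L θ < ℓ := by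
        intro θ hθ
        by_contra hc
        push_neg at hc
        exact absurd (le_csSup hTbdd (⟨⟨le_trans hθsT.1.1 hθ.1.le, hθ.2⟩, hc⟩ : θ ∈ T))
          (not_le.2 hθ.1)
      -- L θs = ℓ by continuity from the right
      have hLθs : L θs = ℓ := by
        refine le_antisymm ?_ hθsT.2
        have htend : Filter.Tendsto L (nhdsWithin θs (Set.Ioi θs)) (nhds (L θs)) :=
          ((hcontAt θs hθspos).tendsto).mono_left nhdsWithin_le_nhds
        refine le_of_tendsto htend ?_
        filter_upwards [Ioo_mem_nhdsGT_of_mem ⟨le_refl θs, hθslt⟩] with θ hθ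
        exact (habove θ ⟨hθ.1, hθ.2.le⟩).le
      -- derivative at θs is positive
      have hder := hasDeriv_L hα0 hα1 L hL hθspos
      rw [hLθs] at hder
      have hdpos : 0 < 1 - (2 - α / θs) * ℓ := by
        have h1 : 2 - α / θs < 1 / ℓ := by
          have : 2 - 1 / ℓ < α / θs := by
            rw [lt_div_iff₀ hθspos]
            calc (2 - 1 / ℓ) * θs < (2 - 1 / ℓ) * θℓ := by
                  exact (mul_lt_mul_iff_right₀ hden).2 hθslt
              _ = α := by
                  rw [hθℓdef, mul_comm, div_mul_cancel₀ _ (ne_of_gt hden)]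
          linarith
        have := (mul_lt_mul_iff_left₀ hℓ0).2 h1
        rw [one_div, inv_mul_cancel₀ (ne_of_gt hℓ0)] at this
        linarith
      -- slope is eventually positive on the right, contradiction with habove
      rw [hasDerivAt_iff_tendsto_slope] at hder
      have hslope : ∀ᶠ θ in nhdsWithin θs {θs}ᶜ, 0 < slope L θs θ :=
        hder.eventually_const_lt hdpos
      have hmem : Set.Ioo θs θℓ ∈ nhdsWithin θs (Set.Ioi θs) :=
        Ioo_mem_nhdsGT_of_mem ⟨le_refl θs, hθslt⟩
      have hsub : nhdsWithin θs (Set.Ioi θs) ≤ nhdsWithin θs {θs}ᶜ :=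
        nhdsWithin_mono _ (fun x hx => ne_of_gt hx)
      obtain ⟨θ, hθslope, hθmem⟩ := ((hslope.filter_mono hsub).and
        (Filter.eventually_of_mem hmem (fun x hx => hx))).exists
      have h1 : 0 < (L θ - L θs) / (θ - θs) := by
        rwa [slope_def_field] at hθslope
      have h2 : 0 < θ - θs := sub_pos.2 hθmem.1
      have h3 : 0 < L θ - L θs := by
        by_contra hc
        push_neg at hc
        nlinarith [div_nonpos_of_nonpos_of_nonneg hc h2.le]
      rw [hLθs] at h3
      exact absurd (habove θ ⟨hθmem.1, hθmem.2.le⟩) (not_lt.2 (by linarith))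
    · exact absurd hcon (not_le.2 (heq ▸ hpoint))
    · -- case A : θℓ < θ₀, use sInf, derivative negative at first crossing
      set T : Set ℝ := {θ ∈ Set.Icc θℓ θ₀ | ℓ ≤ L θ} with hT
      have hTne : T.Nonempty := ⟨θ₀, ⟨hgt.le, le_refl _⟩, hcon⟩
      have hTbdd : BddBelow T := ⟨θℓ, fun x hx => hx.1.1⟩
      have hTclosed : IsClosed T := by
        have : ContinuousOn L (Set.Icc θℓ θ₀) := fun x hx =>
          (hcontAt x (lt_of_lt_of_le hθℓpos hx.1)).continuousWithinAt
        exact this.preimage_isClosed_of_isClosed isClosed_Icc isClosed_Ici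
      set θs := sInf T with hθs
      have hθsT : θs ∈ T := hTclosed.csInf_mem hTne hTbdd
      have hθspos : 0 < θs := lt_of_lt_of_le hθℓpos hθsT.1.1
      have hθsne : θs ≠ θℓ := fun h => absurd hθsT.2 (by rw [h]; exact not_le.2 hpoint)
      have hθsgt : θℓ < θs := lt_of_le_of_ne hθsT.1.1 (Ne.symm hθsne)
      have hbelow : ∀ θ ∈ Set.Ico θℓ θs, L θ < ℓ := by
        intro θ hθ
        by_contra hc
        push_neg at hc
        exact absurd (csInf_le hTbdd (⟨⟨hθ.1, le_trans hθ.2.le hθsT.1.2⟩, hc⟩ : θ ∈ T))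
          (not_le.2 hθ.2)
      have hder := hasDeriv_L hα0 hα1 L hL hθspos
      have hdneg : 1 - (2 - α / θs) * L θs < 0 := by
        have h1 : 1 / ℓ < 2 - α / θs := by
          have : α / θs < 2 - 1 / ℓ := by
            rw [div_lt_iff₀ hθspos]
            calc α = (2 - 1 / ℓ) * θℓ := by
                  rw [hθℓdef, mul_comm, div_mul_cancel₀ _ (ne_of_gt hden)]
              _ < (2 - 1 / ℓ) * θs := (mul_lt_mul_iff_right₀ hden).2 hθsgt
          linarith
        have h2 : 1 < (2 - α / θs) * ℓ := by
          have := (mul_lt_mul_iff_left₀ hℓ0).2 h1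
          rwa [one_div, inv_mul_cancel₀ (ne_of_gt hℓ0)] at this
        have hpos : 0 < 2 - α / θs := lt_trans (one_div_pos.2 hℓ0) h1
        nlinarith [mul_le_mul_of_nonneg_left hθsT.2 hpos.le, h2]
      rw [hasDerivAt_iff_tendsto_slope] at hder
      have hslope : ∀ᶠ θ in nhdsWithin θs {θs}ᶜ, slope L θs θ < 0 :=
        hder.eventually_lt_const hdneg
      have hmem : Set.Ioo θℓ θs ∈ nhdsWithin θs (Set.Iio θs) :=
        Ioo_mem_nhdsLT_of_mem ⟨hθsgt, le_refl θs⟩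
      have hsub : nhdsWithin θs (Set.Iio θs) ≤ nhdsWithin θs {θs}ᶜ :=
        nhdsWithin_mono _ (fun x hx => ne_of_lt hx)
      obtain ⟨θ, hθslope, hθmem⟩ := ((hslope.filter_mono hsub).and
        (Filter.eventually_of_mem hmem (fun x hx => hx))).exists
      have h1 : (L θ - L θs) / (θ - θs) < 0 := by rwa [slope_def_field] at hθslope
      have h2 : θ - θs < 0 := sub_neg.2 hθmem.2
      have h3 : 0 < L θ - L θs := by
        by_contra hc
        push_neg at hc
        nlinarith [div_nonneg_of_nonpos hc h2.le]
      have : ℓ < L θ := lt_of_le_of_lt hθsT.2 (by linarith)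
      exact absurd (hbelow θ ⟨hθmem.1.le, hθmem.2⟩) (not_lt.2 this.le)
  refine ⟨hmain, ?_⟩
  haveI : Nonempty (Set.Ioi (0:ℝ)) := Set.Nonempty.to_subtype (Set.nonempty_Ioi)
  exact ciSup_le fun θ => (hmain θ.1 θ.2).le
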